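/- Let s ≥ 3 and t ≥ 1, and let α = (a₁ … a_r b_s … b₁) and β = (c₁ … c_t b_s … b₁) be cyclic permutations on pairwise distinct symbols, where r = 0 (so α = (b_s b_{s-1} … b₁)). Then β α⁻¹ β⁻¹ α = (b_s c_t b₁). -/

import Mathlib

/-- Case (0,s,t) with s ≥ 3, t ≥ 1: with α = (b_s … b₁) and
β = (c₁ … c_t b_s … b₁) on distinct symbols, the left-to-right product
β α⁻¹ β⁻¹ α equals the 3-cycle (b_s c_t b₁).  Left-to-right composition
σ τ : x ↦ τ(σ(x)) corresponds to the Mathlib product τ * σ. -/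
theorem three_cycle_case_0_s_t {X : Type*} [DecidableEq X]
    (s t : ℕ) (hs : 3 ≤ s) (ht : 1 ≤ t) (b : Fin s → X) (c : Fin t → X)
    (hdist : (List.ofFn b ++ List.ofFn c).Nodup) :
    let α := List.formPerm (List.ofFn b).reverse
    let β := List.formPerm (List.ofFn c ++ (List.ofFn b).reverse)
    α * β⁻¹ * α⁻¹ * β =
      List.formPerm [b ⟨s - 1, by omega⟩, c ⟨t - 1, by omega⟩, b ⟨0, by omega⟩] := by
  intro α β
  have hαdef : α = List.formPerm ((List.ofFn b).reverse) := rfl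
  have hβdef : β = List.formPerm (List.ofFn c ++ (List.ofFn b).reverse) := rfl
  rw [List.nodup_append] at hdist
  obtain ⟨hbn, hcn, hdisj⟩ := hdist
  have hbinj : Function.Injective b := List.nodup_ofFn.mp hbn
  have hcinj : Function.Injective c := List.nodup_ofFn.mp hcn
  have hbc : ∀ (i : Fin s) (j : Fin t), b i ≠ c j := by
    intro i j h
    exact hdisj _ ((List.mem_ofFn' b (b i)).mpr ⟨i, rfl⟩)
      _ ((List.mem_ofFn' c (b i)).mpr ⟨j, h.symm⟩) rfl
  have bcongr : ∀ {i j : ℕ} (hi : i < s) (hj : j < s), i = j → b ⟨i, hi⟩ = b ⟨j, hj⟩ := by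
    rintro i j hi hj rfl
    rfl
  have ccongr : ∀ {i j : ℕ} (hi : i < t) (hj : j < t), i = j → c ⟨i, hi⟩ = c ⟨j, hj⟩ := by
    rintro i j hi hj rfl
    rfl
  have bne : ∀ {i j : ℕ} (hi : i < s) (hj : j < s), i ≠ j → b ⟨i, hi⟩ ≠ b ⟨j, hj⟩ := by
    intro i j hi hj hij h
    have := hbinj h
    simp only [Fin.mk.injEq] at this
    exact hij this
  have cne : ∀ {i j : ℕ} (hi : i < t) (hj : j < t), i ≠ j → c ⟨i, hi⟩ ≠ c ⟨j, hj⟩ := by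
    intro i j hi hj hij h
    have := hcinj h
    simp only [Fin.mk.injEq] at this
    exact hij this
  set L1 : List X := (List.ofFn b).reverse with hL1
  set L2 : List X := List.ofFn c ++ L1 with hL2
  have getElem_eq : ∀ (l : List X) (i j : ℕ) (h : i < l.length) (hij : i = j),
      l[i]'h = l[j]'(hij ▸ h) := by rintro l i j h rfl; rfl
  have hL1len : L1.length = s := by simp [hL1]
  have hL2len : L2.length = t + s := by simp [hL2, hL1]
  have hL1nd : L1.Nodup := List.nodup_reverse.mpr hbn
  have hL2nd : L2.Nodup := by
    rw [hL2, hL1, List.nodup_append]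
    exact ⟨hcn, List.nodup_reverse.mpr hbn,
      fun x hx y hy hxy => hdisj y (List.mem_reverse.mp hy) x hx hxy.symm⟩
  have hL1mem : ∀ x, x ∈ L1 ↔ ∃ i, b i = x := by
    intro x
    rw [hL1, List.mem_reverse, List.mem_ofFn]
  have hL1get : ∀ (k : ℕ) (hk : k < s), L1[k]'(by omega) = b ⟨s - 1 - k, by omega⟩ := by
    intro k hk
    have h1 : ((List.ofFn b).reverse)[k]'(by simpa using hk) = b ⟨s - 1 - k, by omega⟩ := by
      rw [List.getElem_reverse, List.getElem_ofFn]
      exact bcongr _ _ (by simp)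
    exact h1
  have hL2getc : ∀ (j : ℕ) (hj : j < t), L2[j]'(by omega) = c ⟨j, hj⟩ := by
    intro j hj
    have h1 : (List.ofFn c ++ L1)[j]'(by
        simp only [List.length_append, List.length_ofFn, hL1, List.length_reverse]
        omega) = c ⟨j, hj⟩ := by
      rw [List.getElem_append_left (by simpa using hj), List.getElem_ofFn]
    exact h1
  have hL2getb : ∀ (k : ℕ) (hk : k < s),
      L2[t + k]'(by omega) = b ⟨s - 1 - k, by omega⟩ := by
    intro k hk
    have h1 : (List.ofFn c ++ L1)[t + k]'(by
        simp only [List.length_append, List.length_ofFn, hL1, List.length_reverse]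
        omega) = b ⟨s - 1 - k, by omega⟩ := by
      rw [List.getElem_append_right (by simp)]
      have h2 : t + k - (List.ofFn c).length = k := by simp
      rw [getElem_eq L1 _ _ _ h2, hL1get k hk]
    exact h1
  -- α on b
  have hα : ∀ (k : ℕ) (hk : k < s),
      α (b ⟨k, hk⟩) = b ⟨(k + s - 1) % s, Nat.mod_lt _ (by omega)⟩ := by
    intro k hk
    have hmlt : (k + s - 1) % s < s := Nat.mod_lt _ (by omega)
    have hmval : (k + s - 1) % s = if k = 0 then s - 1 else k - 1 := by
      rcases Nat.eq_zero_or_pos k with rfl | hk1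
      · simp [Nat.mod_eq_of_lt (show 0 + s - 1 < s by omega)]
      · rw [if_neg (by omega), show k + s - 1 = (k - 1) + 1 * s by omega,
          Nat.add_mul_mod_self_right, Nat.mod_eq_of_lt (by omega)]
    have h1 : b ⟨k, hk⟩ = L1[s - 1 - k]'(by omega) := by
      rw [hL1get (s - 1 - k) (by omega)]
      exact bcongr _ _ (by omega)
    rw [hαdef, h1, List.formPerm_apply_getElem _ hL1nd _ (by omega)]
    have h2 : (s - 1 - k + 1) % L1.length = s - 1 - ((k + s - 1) % s) := by
      rw [hL1len, hmval]
      rcases Nat.eq_zero_or_pos k with rfl | hk1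
      · rw [if_pos rfl, show s - 1 - 0 + 1 = s by omega, Nat.mod_self]
        omega
      · rw [if_neg (by omega), Nat.mod_eq_of_lt (by omega)]
        omega
    rw [getElem_eq L1 _ _ _ h2, hL1get _ (by omega)]
    exact bcongr _ _ (by omega)
  -- α fixes c
  have hαc : ∀ (j : Fin t), α (c j) = c j := by
    intro j
    rw [hαdef]
    apply List.formPerm_apply_of_notMem
    rw [hL1mem]
    rintro ⟨i, hi⟩
    exact hbc i j hi
  -- β on c, j + 1 < t
  have hβc : ∀ (j : ℕ) (hj : j + 1 < t), β (c ⟨j, by omega⟩) = c ⟨j + 1, hj⟩ := by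
    intro j hj
    have h1 : c ⟨j, by omega⟩ = L2[j]'(by omega) := (hL2getc j (by omega)).symm
    rw [hβdef, h1, List.formPerm_apply_getElem _ hL2nd _ (by omega)]
    have h2 : (j + 1) % L2.length = j + 1 := by
      rw [hL2len]
      exact Nat.mod_eq_of_lt (by omega)
    rw [getElem_eq L2 _ _ _ h2]
    exact hL2getc (j + 1) hj
  -- β c_{t-1} = b_{s-1}
  have hβct : β (c ⟨t - 1, by omega⟩) = b ⟨s - 1, by omega⟩ := by
    have h1 : c ⟨t - 1, by omega⟩ = L2[t - 1]'(by omega) := (hL2getc (t - 1) (by omega)).symm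
    rw [hβdef, h1, List.formPerm_apply_getElem _ hL2nd _ (by omega)]
    have h2 : (t - 1 + 1) % L2.length = t + 0 := by
      rw [hL2len, Nat.mod_eq_of_lt (by omega)]
      omega
    rw [getElem_eq L2 _ _ _ h2, hL2getb 0 (by omega)]
    exact bcongr _ _ (by omega)
  -- β on b, k ≥ 1
  have hβb : ∀ (k : ℕ) (hk : k < s), 1 ≤ k → β (b ⟨k, hk⟩) = b ⟨k - 1, by omega⟩ := by
    intro k hk hk1
    have h1 : b ⟨k, hk⟩ = L2[t + (s - 1 - k)]'(by omega) := by
      rw [hL2getb (s - 1 - k) (by omega)]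
      exact bcongr _ _ (by omega)
    rw [hβdef, h1, List.formPerm_apply_getElem _ hL2nd _ (by omega)]
    have h2 : (t + (s - 1 - k) + 1) % L2.length = t + (s - k) := by
      rw [hL2len, Nat.mod_eq_of_lt (by omega)]
      omega
    rw [getElem_eq L2 _ _ _ h2, hL2getb (s - k) (by omega)]
    exact bcongr _ _ (by omega)
  -- β b_0 = c_0
  have hβb0 : β (b ⟨0, by omega⟩) = c ⟨0, by omega⟩ := by
    have h1 : b ⟨0, by omega⟩ = L2[t + (s - 1)]'(by omega) := by
      rw [hL2getb (s - 1) (by omega)]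
      exact bcongr _ _ (by omega)
    rw [hβdef, h1, List.formPerm_apply_getElem _ hL2nd _ (by omega)]
    have h2 : (t + (s - 1) + 1) % L2.length = 0 := by
      rw [hL2len, show t + (s - 1) + 1 = t + s by omega, Nat.mod_self]
    rw [getElem_eq L2 _ _ _ h2]
    exact hL2getc 0 (by omega)
  -- inverse helper
  have inv_of : ∀ (σ : Equiv.Perm X) (u v : X), σ u = v → σ⁻¹ v = u := by
    intro σ u v h
    rw [← h]; exact σ.symm_apply_apply u
  -- RHS 3-cycle facts
  have h3nd : List.Nodup [b ⟨s - 1, by omega⟩, c ⟨t - 1, by omega⟩, b ⟨0, by omega⟩] := by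
    rw [List.nodup_cons, List.nodup_cons]
    refine ⟨?_, ?_, List.nodup_singleton _⟩
    · intro h
      rcases List.mem_cons.mp h with h | h
      · exact hbc _ _ h
      · have h' : b ⟨s - 1, by omega⟩ = b ⟨0, by omega⟩ := by simpa using h
        exact bne _ _ (by omega) h'
    · intro h
      exact hbc _ _ (List.mem_singleton.mp h).symm
  set γ : Equiv.Perm X :=
    List.formPerm [b ⟨s - 1, by omega⟩, c ⟨t - 1, by omega⟩, b ⟨0, by omega⟩] with hγ
  have hγ1 : γ (b ⟨s - 1, by omega⟩) = c ⟨t - 1, by omega⟩ := by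
    have := List.formPerm_apply_getElem _ h3nd 0 (by norm_num)
    simpa [hγ] using this
  have hγ2 : γ (c ⟨t - 1, by omega⟩) = b ⟨0, by omega⟩ := by
    have := List.formPerm_apply_getElem _ h3nd 1 (by norm_num)
    simpa [hγ] using this
  have hγ3 : γ (b ⟨0, by omega⟩) = b ⟨s - 1, by omega⟩ := by
    have := List.formPerm_apply_getElem _ h3nd 2 (by norm_num)
    simpa [hγ] using this
  have hγfix : ∀ x, x ≠ b ⟨s - 1, by omega⟩ → x ≠ c ⟨t - 1, by omega⟩ →
      x ≠ b ⟨0, by omega⟩ → γ x = x := by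
    intro x h1 h2 h3
    rw [hγ]
    apply List.formPerm_apply_of_notMem
    simp [h1, h2, h3]
  -- main proof
  refine Equiv.ext fun x => ?_
  show α (β⁻¹ (α⁻¹ (β x))) = γ x
  by_cases hx : x ∈ L2
  · rw [hL2, List.mem_append] at hx
    rcases hx with hx | hx
    · -- x = c j
      obtain ⟨j, rfl⟩ := Set.mem_range.mp ((List.mem_ofFn' c x).mp hx)
      have hjlt : (j : ℕ) < t := j.isLt
      by_cases hj : (j : ℕ) + 1 < t
      · -- generic c case: all fixed
        have e1 : β (c j) = c ⟨(j : ℕ) + 1, hj⟩ := hβc j hj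
        have e2 : α⁻¹ (c ⟨(j : ℕ) + 1, hj⟩) = c ⟨(j : ℕ) + 1, hj⟩ :=
          inv_of α _ _ (hαc _)
        have e3 : β⁻¹ (c ⟨(j : ℕ) + 1, hj⟩) = c j := inv_of β _ _ e1
        rw [e1, e2, e3, hαc]
        refine (hγfix _ (fun h => hbc _ _ h.symm) ?_ (fun h => hbc _ _ h.symm)).symm
        exact cne hjlt (by omega) (by omega)
      · -- j = t - 1
        have hxeq : c j = c ⟨t - 1, by omega⟩ := ccongr hjlt (by omega) (by omega)
        rw [hxeq]
        have e2 : α⁻¹ (b ⟨s - 1, by omega⟩) = b ⟨0, by omega⟩ :=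
          inv_of α _ _ ((hα 0 (by omega)).trans (bcongr _ _ (by
            rw [Nat.mod_eq_of_lt (by omega)]; omega)))
        have e3 : β⁻¹ (b ⟨0, by omega⟩) = b ⟨1, by omega⟩ :=
          inv_of β _ _ ((hβb 1 (by omega) le_rfl).trans (bcongr _ _ (by omega)))
        have e4 : α (b ⟨1, by omega⟩) = b ⟨0, by omega⟩ :=
          (hα 1 (by omega)).trans (bcongr _ _ (by
            rw [show 1 + s - 1 = s by omega, Nat.mod_self]))
        rw [hβct, e2, e3, e4]
        exact hγ2.symm
    · -- x = b k
      obtain ⟨k, rfl⟩ := (hL1mem x).mp hx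
      have hklt : (k : ℕ) < s := k.isLt
      rcases Nat.eq_zero_or_pos (k : ℕ) with hk0 | hk1
      · -- k = 0
        have hxeq : b k = b ⟨0, by omega⟩ := bcongr hklt (by omega) hk0
        rw [hxeq]
        have e2 : α⁻¹ (c ⟨0, by omega⟩) = c ⟨0, by omega⟩ := inv_of α _ _ (hαc _)
        have e3 : β⁻¹ (c ⟨0, by omega⟩) = b ⟨0, by omega⟩ := inv_of β _ _ hβb0
        have e4 : α (b ⟨0, by omega⟩) = b ⟨s - 1, by omega⟩ :=
          (hα 0 (by omega)).trans (bcongr _ _ (by rw [Nat.mod_eq_of_lt (by omega)]; omega))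
        rw [hβb0, e2, e3, e4]
        exact hγ3.symm
      · by_cases hks : (k : ℕ) = s - 1
        · -- k = s - 1
          have hxeq : b k = b ⟨s - 1, by omega⟩ := bcongr hklt (by omega) hks
          rw [hxeq]
          have e1 : β (b ⟨s - 1, by omega⟩) = b ⟨s - 2, by omega⟩ :=
            (hβb (s - 1) (by omega) (by omega)).trans (bcongr _ _ (by omega))
          have e2 : α⁻¹ (b ⟨s - 2, by omega⟩) = b ⟨s - 1, by omega⟩ :=
            inv_of α _ _ ((hα (s - 1) (by omega)).trans (bcongr _ _ (by
              rw [show s - 1 + s - 1 = (s - 2) + 1 * s by omega,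
                Nat.add_mul_mod_self_right, Nat.mod_eq_of_lt (by omega)])))
          have e3 : β⁻¹ (b ⟨s - 1, by omega⟩) = c ⟨t - 1, by omega⟩ := inv_of β _ _ hβct
          rw [e1, e2, e3, hαc]
          exact hγ1.symm
        · -- 1 ≤ k ≤ s - 2 : fixed
          have e1 : β (b k) = b ⟨(k : ℕ) - 1, by omega⟩ := hβb (k : ℕ) hklt hk1
          have e2 : α⁻¹ (b ⟨(k : ℕ) - 1, by omega⟩) = b ⟨(k : ℕ), hklt⟩ :=
            inv_of α _ _ ((hα (k : ℕ) hklt).trans (bcongr _ _ (by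
              rw [show (k : ℕ) + s - 1 = ((k : ℕ) - 1) + 1 * s by omega,
                Nat.add_mul_mod_self_right, Nat.mod_eq_of_lt (by omega)])))
          have e3 : β⁻¹ (b ⟨(k : ℕ), hklt⟩) = b ⟨(k : ℕ) + 1, by omega⟩ :=
            inv_of β _ _ ((hβb ((k : ℕ) + 1) (by omega) (by omega)).trans
              (bcongr _ _ (by omega)))
          have e4 : α (b ⟨(k : ℕ) + 1, by omega⟩) = b ⟨(k : ℕ), hklt⟩ :=
            (hα ((k : ℕ) + 1) (by omega)).trans (bcongr _ _ (by
              rw [show (k : ℕ) + 1 + s - 1 = (k : ℕ) + 1 * s by omega,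
                Nat.add_mul_mod_self_right, Nat.mod_eq_of_lt (by omega)]))
          rw [e1, e2, e3, e4]
          exact (hγfix (b ⟨(k : ℕ), hklt⟩) (bne _ _ (by omega)) (fun h => hbc _ _ h)
            (bne _ _ (by omega))).symm
  · -- x not in L2: everything fixes x
    have hx1 : x ∉ L1 := fun h => hx (List.mem_append.mpr (Or.inr h))
    have fα : α x = x := by
      rw [hαdef]
      exact List.formPerm_apply_of_notMem hx1
    have fβ : β x = x := by
      rw [hβdef]
      exact List.formPerm_apply_of_notMem hx
    have fα' : α⁻¹ x = x := inv_of α _ _ fα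
    have fβ' : β⁻¹ x = x := inv_of β _ _ fβ
    rw [fβ, fα', fβ', fα]
    refine (hγfix x ?_ ?_ ?_).symm <;> rintro rfl <;> apply hx
    · exact List.mem_append.mpr (Or.inr ((hL1mem _).mpr ⟨_, rfl⟩))
    · exact List.mem_append.mpr (Or.inl ((List.mem_ofFn' c _).mpr ⟨_, rfl⟩))
    · exact List.mem_append.mpr (Or.inr ((hL1mem _).mpr ⟨_, rfl⟩))
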